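/- Let P₁ be the logic program over Σ₁ = {nat/1, s/1, 0/0} with clauses nat(0) ← and nat(s(X)) ← nat(X). For every goal clause C = ? ← t with t a finite term over Σ₁ and every idempotent substitution σ, the rewriting tree rew(P₁, C, σ) is finite; that is, P₁ is observationally productive. -/

import Mathlib

namespace T3C

/-- A (finitely branching) tree language: prefix-closed, closed under smaller
sibling indices, and finitely branching. -/
def IsTreeLang (L : Set (List ℕ)) : Prop :=
  (∀ (w : List ℕ) (j : ℕ), w ++ [j] ∈ L → w ∈ L) ∧
  (∀ (w : List ℕ) (i j : ℕ), w ++ [j] ∈ L → i < j → w ++ [i] ∈ L) ∧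
  (∀ w ∈ L, { i : ℕ | w ++ [i] ∈ L }.Finite)

/-- A term tree over a signature `Sig` (with arity function `ar`) and
variables `V` (each of arity `0`): a function from a non-empty tree language
to `Sig ⊕ V` satisfying the arity condition.  Nodes outside the domain are
labelled `none`. -/
structure Tm (Sig V : Type) (ar : Sig → ℕ) where
  label : List ℕ → Option (Sig ⊕ V)
  root : label [] ≠ none
  tl : IsTreeLang { w | label w ≠ none }
  arity : ∀ w a, label w = some a →
    { i : ℕ | label (w ++ [i]) ≠ none }.ncard = Sum.elim ar (fun _ => 0) a

variable {Sig V : Type} {ar : Sig → ℕ}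

/-- A term tree is finite if its domain tree language is finite. -/
def Tm.Fin (t : Tm Sig V ar) : Prop := { w | t.label w ≠ none }.Finite

/-- A substitution: a total function from variables to finite term trees. -/
structure Subst (Sig V : Type) (ar : Sig → ℕ) where
  toFun : V → Tm Sig V ar
  fin : ∀ X, (toFun X).Fin

/-- Auxiliary function computing the label of `σ(t)` at `u ++ v`, scanning
the word for the first variable node of `t`. -/
def subAppAux (σ : V → Tm Sig V ar) (t : Tm Sig V ar) :
    List ℕ → List ℕ → Option (Sig ⊕ V)
  | u, [] =>
    match t.label u with
    | some (Sum.inr X) => (σ X).label []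
    | o => o
  | u, i :: v =>
    match t.label u with
    | some (Sum.inr X) => (σ X).label (i :: v)
    | _ => subAppAux σ t (u ++ [i]) v

/-- `sapp σ t` is the label function of the application `σ(t)` of the
substitution `σ` to the term tree `t`. -/
def sapp (σ : Subst Sig V ar) (t : Tm Sig V ar) : List ℕ → Option (Sig ⊕ V) :=
  subAppAux σ.toFun t []

/-- `σ` is a matcher of `t` against `u` iff `σ(t) = u`. -/
def IsMatcher (σ : Subst Sig V ar) (t u : Tm Sig V ar) : Prop :=
  sapp σ t = u.label

/-- `σ` is a unifier of `t` and `u` iff `σ(t) = σ(u)`. -/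
def IsUnifier (σ : Subst Sig V ar) (t u : Tm Sig V ar) : Prop :=
  sapp σ t = sapp σ u

/-- `σ₁` is more general than `σ₂` iff `σσ₁ = σ₂` for some substitution `σ`. -/
def MoreGen (σ₁ σ₂ : Subst Sig V ar) : Prop :=
  ∃ σ : Subst Sig V ar, ∀ X, sapp σ (σ₁.toFun X) = (σ₂.toFun X).label

/-- A most general matcher of `t` against `u`. -/
def IsMGM (θ : Subst Sig V ar) (t u : Tm Sig V ar) : Prop :=
  IsMatcher θ t u ∧ ∀ θ' : Subst Sig V ar, IsMatcher θ' t u → MoreGen θ θ'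

/-- A most general unifier of `t` and `u`. -/
def IsMGU (σ : Subst Sig V ar) (t u : Tm Sig V ar) : Prop :=
  IsUnifier σ t u ∧ ∀ σ' : Subst Sig V ar, IsUnifier σ' t u → MoreGen σ σ'

/-- Idempotence: `σσ = σ`. -/
def Idem (σ : Subst Sig V ar) : Prop :=
  ∀ X, sapp σ (σ.toFun X) = (σ.toFun X).label

open scoped Classical

/-- The term tree consisting of a single variable node. -/
def varTm (X : V) : Tm Sig V ar where
  label := fun w => if w = [] then some (Sum.inr X) else none
  root := by simp
  tl := by
    refine ⟨?_, ?_, ?_⟩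
    · intro w j hwj
      exfalso
      simp only [Set.mem_setOf_eq] at hwj
      rw [if_neg (by simp)] at hwj
      exact hwj rfl
    · intro w i j hwj hij
      exfalso
      simp only [Set.mem_setOf_eq] at hwj
      rw [if_neg (by simp)] at hwj
      exact hwj rfl
    · intro w _
      apply Set.Finite.subset Set.finite_empty
      intro i hi
      simp only [Set.mem_setOf_eq] at hi
      rw [if_neg (by simp)] at hi
      exact absurd rfl hi
  arity := by
    intro w a hwa
    by_cases hw : w = []
    · subst hw
      simp only [if_pos rfl] at hwa
      cases Option.some.inj hwa
      have hset : { i : ℕ |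
          (fun w => if w = ([] : List ℕ) then some (Sum.inr X : Sig ⊕ V) else none)
            (([] : List ℕ) ++ [i]) ≠ none } = ∅ := by
        ext i
        simp
      rw [hset]
      simp
    · simp only [if_neg hw] at hwa
      exact absurd hwa (by simp)

lemma varTm_fin (X : V) : (varTm X : Tm Sig V ar).Fin := by
  apply Set.Finite.subset (Set.finite_singleton ([] : List ℕ))
  intro w hw
  simp only [Set.mem_setOf_eq, varTm] at hw
  by_cases h : w = []
  · simpa using h
  · rw [if_neg h] at hw; exact absurd rfl hw

/-- The identity substitution. -/
def idS : Subst Sig V ar := ⟨fun X => varTm X, fun X => varTm_fin X⟩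

/-- A clause `head ← B₀, …, Bₙ`.  (Goal clauses are clauses whose head is built
from the reserved goal symbol `?` of the signature.) -/
structure Clause (Sig V : Type) (ar : Sig → ℕ) where
  head : Tm Sig V ar
  body : List (Tm Sig V ar)

/-- A logic program: a function from `{0, …, n} ⊆ ℕ` to (non-goal) clauses,
encoded as a non-empty list of clauses. -/
structure Prog (Sig V : Type) (ar : Sig → ℕ) where
  clauses : List (Clause Sig V ar)
  ne : clauses ≠ []

/-- Application of a substitution to a term tree, as a term tree (the label
function of the result is `sapp σ t`). -/
noncomputable def appT (σ : Subst Sig V ar) (t : Tm Sig V ar) : Tm Sig V ar :=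
  if h : ∃ t' : Tm Sig V ar, t'.label = sapp σ t then h.choose else t

/-- Application of a substitution to a clause, homomorphically. -/
noncomputable def appC (σ : Subst Sig V ar) (C : Clause Sig V ar) : Clause Sig V ar :=
  ⟨appT σ C.head, C.body.map (appT σ)⟩

/-- Composition of substitutions: `(compS σ' σ)(X) = σ'(σ(X))`. -/
noncomputable def compS (σ' σ : Subst Sig V ar) : Subst Sig V ar :=
  if h : ∃ τ : Subst Sig V ar, ∀ X, (τ.toFun X).label = sapp σ' (σ.toFun X) then
    h.choose
  else σ'

/-- The substitution renaming variables along `ρ`. -/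
def renSubst (ρ : V → V) : Subst Sig V ar := ⟨fun X => varTm (ρ X), fun X => varTm_fin (ρ X)⟩

/-- `C'` is obtained from `C` by (injectively) renaming its variables. -/
def IsRenaming (C C' : Clause Sig V ar) : Prop :=
  ∃ ρ : V → V, Function.Injective ρ ∧
    C'.head.label = sapp (renSubst ρ) C.head ∧
    C'.body.length = C.body.length ∧
    ∀ (j : ℕ) (t t' : Tm Sig V ar), C.body[j]? = some t → C'.body[j]? = some t' →
      t'.label = sapp (renSubst ρ) t

/-- Labels of nodes of rewriting trees: term trees (and-nodes), clauses
(or-nodes), or Tier 2 variables from `VR` (variable or-nodes). -/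
abbrev RLab (Sig V : Type) (ar : Sig → ℕ) (VR : Type) : Type :=
  Tm Sig V ar ⊕ (Clause Sig V ar ⊕ VR)

/-- A fixed scheme of proof-search data: a deterministic most general matcher
and most general unifier algorithm, a renaming-apart scheme for program
clauses (renaming determined by the node at which the clause is used, as in
the renaming-apart convention), and a scheme of fresh Tier 2 variables
(likewise determined by the node). -/
structure Scheme (Sig V : Type) (ar : Sig → ℕ) (VR : Type) where
  mgm : Tm Sig V ar → Tm Sig V ar → Option (Subst Sig V ar)
  mgm_sound : ∀ t u θ, mgm t u = some θ → IsMGM θ t u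
  mgm_complete : ∀ t u, (∃ θ : Subst Sig V ar, IsMatcher θ t u) → (mgm t u).isSome
  mgu : Tm Sig V ar → Tm Sig V ar → Option (Subst Sig V ar)
  mgu_sound : ∀ t u σ, mgu t u = some σ → IsMGU σ t u
  mgu_complete : ∀ t u, (∃ σ : Subst Sig V ar, IsUnifier σ t u) → (mgu t u).isSome
  ren : List ℕ → Clause Sig V ar → Clause Sig V ar
  ren_renaming : ∀ w C, IsRenaming C (ren w C)
  fresh : List ℕ → VR
  fresh_inj : Function.Injective fresh

variable {VR : Type}

/-- Conditions (1)–(4) of the definition of the rewriting tree `rew(P, C, σ)`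
(Definition 4.1): (1) the root is labelled `σ(C)` and its children are the
body of `σ(C)`; (2) or-nodes are clauses or Tier 2 variables, Tier 2 variable
nodes are leaves, and the children of an or-node labelled by a clause `B`
(which is `σ(θ(P(i)))` by (3)) are the body terms `σ(θ(P(i)(j)))` of `B`;
(3) each and-node `T(w)` (a term) has, for every clause index `i` of `P`, the
child `T(wi) = σ(θ(P(i)))` if `head(P(i))` matches `T(w)` via the mgm `θ`
(with `P(i)` renamed apart at node `wi`), and a fresh Tier 2 variable
(determined by the node `wi`) otherwise; (4) no other words are in the
domain. -/
def RewSpec (S : Scheme Sig V ar VR) (P : Prog Sig V ar) (C : Clause Sig V ar)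
    (σ : Subst Sig V ar) (T : List ℕ → Option (RLab Sig V ar VR)) : Prop :=
  T [] = some (Sum.inr (Sum.inl (appC σ C))) ∧
  (∀ (w : List ℕ) (B : Clause Sig V ar), T w = some (Sum.inr (Sum.inl B)) →
    ∀ j : ℕ, T (w ++ [j]) = (B.body[j]?).map Sum.inl) ∧
  (∀ (w : List ℕ) (X : VR), T w = some (Sum.inr (Sum.inr X)) →
    ∀ i : ℕ, T (w ++ [i]) = none) ∧
  (∀ (w : List ℕ) (t : Tm Sig V ar), T w = some (Sum.inl t) →
    ∀ i : ℕ, T (w ++ [i]) =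
      match P.clauses[i]? with
      | none => none
      | some Ci =>
        match S.mgm (S.ren (w ++ [i]) Ci).head t with
        | some θ => some (Sum.inr (Sum.inl (appC σ (appC θ (S.ren (w ++ [i]) Ci)))))
        | none => some (Sum.inr (Sum.inr (S.fresh (w ++ [i]))))) ∧
  (∀ (w : List ℕ) (i : ℕ), T (w ++ [i]) ≠ none → T w ≠ none)

/-- The rewriting tree `rew(P, C, σ)` (as a label function). -/
noncomputable def rew (S : Scheme Sig V ar VR) (P : Prog Sig V ar)
    (C : Clause Sig V ar) (σ : Subst Sig V ar) : List ℕ → Option (RLab Sig V ar VR) :=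
  if h : ∃ T, RewSpec S P C σ T then h.choose else fun _ => none

/-- Application of a substitution to the label of a node of a rewriting tree
(identity on Tier 2 variables). -/
noncomputable def rlabApp (σ : Subst Sig V ar) :
    RLab Sig V ar VR → RLab Sig V ar VR
  | Sum.inl t => Sum.inl (appT σ t)
  | Sum.inr (Sum.inl B) => Sum.inr (Sum.inl (appC σ B))
  | Sum.inr (Sum.inr X) => Sum.inr (Sum.inr X)

/-- Definition 4.4: the application `σ'(T)` of a substitution `σ'` to a
rewriting tree `T = rew(P, C, σ)`: on and-nodes and non-variable or-nodes it
acts label-wise; below a Tier 2 variable or-node `T(wi)` whose parent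
and-node is labelled `t`, if the mgm `θ` of `head(P(i))` (renamed apart at
`wi`) against `σ'(t) = (σ'(T))(w)` exists then `(σ'(T))(wiv) =
rew(P, θ(P(i)), σ'σ)(v)`, and otherwise `(σ'(T))(wi) = T(wi)` is unchanged. -/
noncomputable def rsub (S : Scheme Sig V ar VR) (P : Prog Sig V ar)
    (σ' σ : Subst Sig V ar) (T : List ℕ → Option (RLab Sig V ar VR)) :
    List ℕ → Option (RLab Sig V ar VR) := fun w =>
  if h : ∃ p : List ℕ × ℕ × List ℕ × Tm Sig V ar,
      w = (p.1 ++ [p.2.1]) ++ p.2.2.1 ∧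
      (∃ X : VR, T (p.1 ++ [p.2.1]) = some (Sum.inr (Sum.inr X))) ∧
      T p.1 = some (Sum.inl p.2.2.2) then
    match P.clauses[h.choose.2.1]? with
    | none => T w
    | some Ci =>
      match S.mgm (S.ren (h.choose.1 ++ [h.choose.2.1]) Ci).head (appT σ' h.choose.2.2.2) with
      | some θ =>
          rew S P (appC θ (S.ren (h.choose.1 ++ [h.choose.2.1]) Ci)) (compS σ' σ) h.choose.2.2.1
      | none => T w
  else (T w).map (rlabApp σ')

def nodeLabel (f : Sig) (ts : List (Tm Sig V ar)) : List ℕ → Option (Sig ⊕ V)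
  | [] => some (Sum.inl f)
  | i :: w =>
    match ts[i]? with
    | some t => t.label w
    | none => none

lemma nodeLabel_cons_ne {f : Sig} {ts : List (Tm Sig V ar)} {i : ℕ} {w : List ℕ} :
    nodeLabel f ts (i :: w) ≠ none ↔ ∃ t, ts[i]? = some t ∧ t.label w ≠ none := by
  cases h : ts[i]? with
  | none => simp [nodeLabel, h]
  | some t => simp [nodeLabel, h]

lemma ncard_Iio (n : ℕ) : (Set.Iio n).ncard = n := by
  rw [← Finset.coe_Iio, Set.ncard_coe_finset, Nat.card_Iio]

/-- Building a term tree from a root function symbol and a list of immediate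
subtrees whose length is the arity of the root symbol. -/
def nodeTm (f : Sig) (ts : List (Tm Sig V ar)) (h : ar f = ts.length) :
    Tm Sig V ar where
  label := nodeLabel f ts
  root := by simp [nodeLabel]
  tl := by
    refine ⟨?_, ?_, ?_⟩
    · intro w j hwj
      match w with
      | [] => simp [Set.mem_setOf_eq, nodeLabel]
      | i :: w' =>
        simp only [List.cons_append, Set.mem_setOf_eq, nodeLabel_cons_ne] at hwj ⊢
        obtain ⟨t, hts, hl⟩ := hwj
        exact ⟨t, hts, t.tl.1 w' j hl⟩
    · intro w i j hwj hij
      match w with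
      | [] =>
        simp only [List.nil_append, Set.mem_setOf_eq, nodeLabel_cons_ne] at hwj ⊢
        obtain ⟨t, hts, -⟩ := hwj
        have hj : j < ts.length := (List.getElem?_eq_some_iff.mp hts).1
        have hi : i < ts.length := lt_trans hij hj
        exact ⟨ts[i], List.getElem?_eq_getElem hi, (ts[i]).root⟩
      | k :: w' =>
        simp only [List.cons_append, Set.mem_setOf_eq, nodeLabel_cons_ne] at hwj ⊢
        obtain ⟨t, hts, hl⟩ := hwj
        exact ⟨t, hts, t.tl.2.1 w' i j hl hij⟩
    · intro w hw
      match w with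
      | [] =>
        apply Set.Finite.subset (Set.finite_Iio ts.length)
        intro i hi
        simp only [List.nil_append, Set.mem_setOf_eq, nodeLabel_cons_ne] at hi
        obtain ⟨t, hts, -⟩ := hi
        exact (List.getElem?_eq_some_iff.mp hts).1
      | k :: w' =>
        simp only [Set.mem_setOf_eq, nodeLabel_cons_ne] at hw
        obtain ⟨t, hts, hl⟩ := hw
        have hfin := t.tl.2.2 w' hl
        apply Set.Finite.subset hfin
        intro i hi
        simp only [List.cons_append, Set.mem_setOf_eq, nodeLabel_cons_ne, hts] at hi
        obtain ⟨t', ht', hl'⟩ := hi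
        cases Option.some.inj ht'
        exact hl'
  arity := by
    intro w a hwa
    match w with
    | [] =>
      have ha : Sum.inl f = a := Option.some.inj hwa
      subst ha
      have hset : { i : ℕ | nodeLabel f ts ([] ++ [i]) ≠ none } = Set.Iio ts.length := by
        ext i
        simp only [List.nil_append, Set.mem_setOf_eq, nodeLabel_cons_ne, Set.mem_Iio]
        constructor
        · rintro ⟨t, hts, -⟩
          exact (List.getElem?_eq_some_iff.mp hts).1
        · intro hi
          exact ⟨ts[i], List.getElem?_eq_getElem hi, (ts[i]).root⟩
      rw [hset, ncard_Iio]
      simpa using h.symm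
    | k :: w' =>
      have hne : nodeLabel f ts (k :: w') ≠ none := by rw [hwa]; simp
      rw [nodeLabel_cons_ne] at hne
      obtain ⟨t, hts, -⟩ := hne
      have hl : t.label w' = some a := by
        simpa [nodeLabel, hts] using hwa
      have := t.arity w' a hl
      rw [← this]
      congr 1
      ext i
      simp [List.cons_append, nodeLabel_cons_ne, hts]

end T3C

namespace T3C

/-- The signature Σ₁ ∪ {?} = {nat/1, s/1, 0/0} together with the goal symbol `?`. -/
inductive Sig1 : Type
  | nat : Sig1
  | s : Sig1
  | zero : Sig1
  | qm : Sig1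

def ar1 : Sig1 → ℕ
  | Sig1.nat => 1
  | Sig1.s => 1
  | Sig1.zero => 0
  | Sig1.qm => 0

variable {V : Type}

/-- The program `P₁ = {nat(0) ← ;  nat(s(X)) ← nat(X)}` (with variable `X`). -/
def P1 (X : V) : Prog Sig1 V ar1 :=
  ⟨[⟨nodeTm Sig1.nat [nodeTm Sig1.zero [] rfl] rfl, []⟩,
    ⟨nodeTm Sig1.nat [nodeTm Sig1.s [varTm X] rfl] rfl,
     [nodeTm Sig1.nat [varTm X] rfl]⟩], by simp⟩

/-- The goal clause `? ← t`. -/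
def goalClause (t : Tm Sig1 V ar1) : Clause Sig1 V ar1 :=
  ⟨nodeTm Sig1.qm [] rfl, [t]⟩

end T3C

namespace T3C

variable {Sig V : Type} {ar : Sig → ℕ}

lemma Tm.label_ext_none (t : Tm Sig V ar) {u : List ℕ} (h : t.label u = none) :
    ∀ v, t.label (u ++ v) = none := by
  intro v
  induction v generalizing u with
  | nil => simpa using h
  | cons j v ih =>
    have h1 : t.label (u ++ [j]) = none := by
      by_contra hc
      exact (t.tl.1 u j hc) h
    have h2 := ih h1
    rw [show u ++ j :: v = (u ++ [j]) ++ v by simp]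
    exact h2

lemma Tm.label_pre_ne (t : Tm Sig V ar) {u v : List ℕ} (h : t.label (u ++ v) ≠ none) :
    t.label u ≠ none := fun hn => h (t.label_ext_none hn v)

lemma Tm.var_children_none (t : Tm Sig V ar) {u : List ℕ} {X : V}
    (h : t.label u = some (Sum.inr X)) : ∀ i, t.label (u ++ [i]) = none := by
  have hfin : { i : ℕ | t.label (u ++ [i]) ≠ none }.Finite :=
    t.tl.2.2 u (by simp [h])
  have hcard : { i : ℕ | t.label (u ++ [i]) ≠ none }.ncard = 0 := t.arity u _ h
  have hempty : { i : ℕ | t.label (u ++ [i]) ≠ none } = ∅ :=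
    (Set.ncard_eq_zero hfin).mp hcard
  intro i
  by_contra hc
  have : i ∈ { i : ℕ | t.label (u ++ [i]) ≠ none } := hc
  rw [hempty] at this
  exact this

lemma Tm.var_ext_none (t : Tm Sig V ar) {u : List ℕ} {X : V}
    (h : t.label u = some (Sum.inr X)) {v : List ℕ} (hv : v ≠ []) :
    t.label (u ++ v) = none := by
  match v with
  | [] => exact absurd rfl hv
  | i :: v' =>
    rw [show u ++ i :: v' = (u ++ [i]) ++ v' by simp]
    exact t.label_ext_none (t.var_children_none h i) v'

lemma subAppAux_no_var (σf : V → Tm Sig V ar) (t : Tm Sig V ar) :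
    ∀ (w p : List ℕ),
      (∀ u v, u ++ v = w → ∀ X, t.label (p ++ u) ≠ some (Sum.inr X)) →
      subAppAux σf t p w = t.label (p ++ w) := by
  intro w
  induction w with
  | nil =>
    intro p h
    have h0 := h [] [] rfl
    rcases hl : t.label p with - | a
    · simp [subAppAux, hl]
    · rcases a with f | Y
      · simp [subAppAux, hl]
      · exact absurd (by simpa using hl) (h0 Y)
  | cons i v ih =>
    intro p h
    have h0 := h [] (i :: v) rfl
    rcases hl : t.label p with - | a
    · rw [show subAppAux σf t p (i :: v) = subAppAux σf t (p ++ [i]) v by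
        simp [subAppAux, hl]]
      rw [show p ++ i :: v = (p ++ [i]) ++ v by simp]
      exact ih (p ++ [i]) (fun u v' huv X => by
        rw [show (p ++ [i]) ++ u = p ++ (i :: u) by simp]
        exact h (i :: u) v' (by simp [← huv]) X)
    · rcases a with f | Y
      · rw [show subAppAux σf t p (i :: v) = subAppAux σf t (p ++ [i]) v by
          simp [subAppAux, hl]]
        rw [show p ++ i :: v = (p ++ [i]) ++ v by simp]
        exact ih (p ++ [i]) (fun u v' huv X => by
          rw [show (p ++ [i]) ++ u = p ++ (i :: u) by simp]
          exact h (i :: u) v' (by simp [← huv]) X)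
      · exact absurd (by simpa using hl) (h0 Y)

lemma subAppAux_graft (σf : V → Tm Sig V ar) (t : Tm Sig V ar) :
    ∀ (q p v : List ℕ) (X : V), t.label (p ++ q) = some (Sum.inr X) →
      subAppAux σf t p (q ++ v) = (σf X).label v := by
  intro q
  induction q with
  | nil =>
    intro p v X h
    simp only [List.append_nil] at h
    cases v with
    | nil => simp [subAppAux, h]
    | cons i v' => simp [subAppAux, h]
  | cons i q' ih =>
    intro p v X h
    have hpn : t.label p ≠ none :=
      t.label_pre_ne (v := i :: q') (by rw [h]; simp)
    rcases hl : t.label p with - | a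
    · exact absurd hl hpn
    · rcases a with f | Y
      · rw [show (i :: q') ++ v = i :: (q' ++ v) by simp,
          show subAppAux σf t p (i :: (q' ++ v)) = subAppAux σf t (p ++ [i]) (q' ++ v) by
            simp [subAppAux, hl]]
        exact ih (p ++ [i]) v X (by rw [show (p ++ [i]) ++ q' = p ++ (i :: q') by simp]; exact h)
      · exact absurd (t.var_ext_none hl (by simp) : t.label (p ++ (i :: q')) = none)
          (by rw [h]; simp)

lemma sapp_no_var (σ : Subst Sig V ar) (t : Tm Sig V ar) (w : List ℕ)
    (h : ∀ u v, u ++ v = w → ∀ X, t.label u ≠ some (Sum.inr X)) :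
    sapp σ t w = t.label w := by
  have := subAppAux_no_var σ.toFun t w [] (fun u v huv X => by
    simpa using h u v huv X)
  simpa [sapp] using this

lemma sapp_graft (σ : Subst Sig V ar) {t : Tm Sig V ar} {u : List ℕ} {X : V}
    (h : t.label u = some (Sum.inr X)) (v : List ℕ) :
    sapp σ t (u ++ v) = (σ.toFun X).label v := by
  have := subAppAux_graft σ.toFun t u [] v X (by simpa using h)
  simpa [sapp] using this

end T3C

namespace T3C

variable {Sig V : Type} {ar : Sig → ℕ}

lemma append_concat_cases {u v w : List ℕ} {j : ℕ} (h : u ++ v = w ++ [j]) :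
    (u = w ++ [j] ∧ v = []) ∨ ∃ v', v = v' ++ [j] ∧ u ++ v' = w := by
  rcases List.eq_nil_or_concat v with rfl | ⟨v', j', rfl⟩
  · left; exact ⟨by simpa using h, rfl⟩
  · right
    have h2 : (u ++ v') ++ [j'] = w ++ [j] := by
      simpa [List.concat_eq_append] using h
    obtain ⟨h3, h4⟩ := List.append_inj' h2 rfl
    have : j' = j := by simpa using h4
    subst this
    exact ⟨v', by simp [List.concat_eq_append], h3⟩

lemma sapp_cases (σ : Subst Sig V ar) (t : Tm Sig V ar) (w : List ℕ) :
    (∃ u v X, w = u ++ v ∧ t.label u = some (Sum.inr X) ∧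
        sapp σ t w = (σ.toFun X).label v ∧
        ∀ i, sapp σ t (w ++ [i]) = (σ.toFun X).label (v ++ [i])) ∨
    (sapp σ t w = t.label w ∧ ∀ u v, u ++ v = w → ∀ X, t.label u ≠ some (Sum.inr X)) := by
  by_cases hv : ∃ u v X, u ++ v = w ∧ t.label u = some (Sum.inr X)
  · obtain ⟨u, v, X, huv, hX⟩ := hv
    left
    refine ⟨u, v, X, huv.symm, hX, ?_, ?_⟩
    · rw [← huv]; exact sapp_graft σ hX v
    · intro i
      rw [← huv, List.append_assoc]
      exact sapp_graft σ hX (v ++ [i])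
  · right
    push_neg at hv
    refine ⟨sapp_no_var σ t w (fun u v huv X hl => hv u v X huv hl), ?_⟩
    exact fun u v huv X hl => hv u v X huv hl

lemma sapp_ne_none (σ : Subst Sig V ar) (t : Tm Sig V ar) {w : List ℕ}
    (h : t.label w ≠ none) : sapp σ t w ≠ none := by
  rcases sapp_cases σ t w with ⟨u, v, X, rfl, hX, hval, -⟩ | ⟨hval, -⟩
  · rcases List.eq_nil_or_concat v with rfl | ⟨v', j', rfl⟩
    · rw [hval]; exact (σ.toFun X).root
    · exact absurd (t.var_ext_none hX (by simp [List.concat_eq_append])) h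
  · rw [hval]; exact h

lemma sapp_children_no_var (σ : Subst Sig V ar) (t : Tm Sig V ar) (w : List ℕ)
    (h : ∀ u v, u ++ v = w → ∀ X, t.label u ≠ some (Sum.inr X)) :
    {i : ℕ | sapp σ t (w ++ [i]) ≠ none} = {i : ℕ | t.label (w ++ [i]) ≠ none} := by
  ext i
  simp only [Set.mem_setOf_eq]
  by_cases hXi : ∃ X, t.label (w ++ [i]) = some (Sum.inr X)
  · obtain ⟨X, hX⟩ := hXi
    have h1 : sapp σ t (w ++ [i]) = (σ.toFun X).label [] := by
      simpa using sapp_graft σ hX []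
    rw [h1, hX]
    simp [(σ.toFun X).root]
  · have h1 : sapp σ t (w ++ [i]) = t.label (w ++ [i]) := by
      apply sapp_no_var
      intro u v huv X hl
      rcases append_concat_cases huv with ⟨rfl, rfl⟩ | ⟨v', rfl, huv'⟩
      · exact hXi ⟨X, hl⟩
      · exact h u v' huv' X hl
    rw [h1]

lemma sapp_realize (σ : Subst Sig V ar) (t : Tm Sig V ar) :
    ∃ t' : Tm Sig V ar, t'.label = sapp σ t := by
  refine ⟨⟨sapp σ t, ?_, ⟨?_, ?_, ?_⟩, ?_⟩, rfl⟩
  · -- root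
    rcases sapp_cases σ t [] with ⟨u, v, X, huv, hX, hval, -⟩ | ⟨hval, -⟩
    · obtain ⟨hu, hv'⟩ := List.append_eq_nil_iff.mp huv.symm
      subst hu; subst hv'
      rw [hval]; exact (σ.toFun X).root
    · rw [hval]; exact t.root
  · -- prefix closed
    intro w j hwj
    simp only [Set.mem_setOf_eq] at hwj ⊢
    rcases sapp_cases σ t (w ++ [j]) with ⟨u, v, X, huv, hX, hval, -⟩ | ⟨hval, -⟩
    · rcases append_concat_cases huv.symm with ⟨rfl, rfl⟩ | ⟨v', rfl, huv'⟩
      · exact sapp_ne_none σ t (t.label_pre_ne (v := [j]) (by rw [hX]; simp))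
      · have h1 : sapp σ t w = (σ.toFun X).label v' := by
          rw [← huv']; exact sapp_graft σ hX v'
        rw [hval] at hwj
        rw [h1]
        exact (σ.toFun X).tl.1 v' j hwj
    · rw [hval] at hwj
      exact sapp_ne_none σ t (t.tl.1 w j hwj)
  · -- siblings
    intro w i j hwj hij
    simp only [Set.mem_setOf_eq] at hwj ⊢
    rcases sapp_cases σ t (w ++ [j]) with ⟨u, v, X, huv, hX, hval, -⟩ | ⟨hval, -⟩
    · rcases append_concat_cases huv.symm with ⟨rfl, rfl⟩ | ⟨v', rfl, huv'⟩
      · exact sapp_ne_none σ t (t.tl.2.1 w i j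
          (by simp only [Set.mem_setOf_eq]; rw [hX]; simp) hij)
      · have h1 : sapp σ t (w ++ [i]) = (σ.toFun X).label (v' ++ [i]) := by
          rw [← huv', List.append_assoc]; exact sapp_graft σ hX (v' ++ [i])
        rw [hval] at hwj
        rw [h1]
        exact (σ.toFun X).tl.2.1 v' i j hwj hij
    · rw [hval] at hwj
      exact sapp_ne_none σ t (t.tl.2.1 w i j hwj hij)
  · -- finite branching
    intro w hw
    simp only [Set.mem_setOf_eq] at hw
    rcases sapp_cases σ t w with ⟨u, v, X, rfl, hX, hval, hchild⟩ | ⟨hval, hnv⟩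
    · apply Set.Finite.subset ((σ.toFun X).tl.2.2 v (by rw [hval] at hw; exact hw))
      intro i hi
      simp only [Set.mem_setOf_eq] at hi ⊢
      rw [hchild i] at hi
      exact hi
    · apply Set.Finite.subset (t.tl.2.2 w (by rw [hval] at hw; exact hw))
      intro i hi
      simp only [Set.mem_setOf_eq] at hi ⊢
      have := sapp_children_no_var σ t w hnv
      have hmem : i ∈ {i : ℕ | sapp σ t (w ++ [i]) ≠ none} := hi
      rw [this] at hmem
      exact hmem
  · -- arity
    intro w a ha
    rcases sapp_cases σ t w with ⟨u, v, X, rfl, hX, hval, hchild⟩ | ⟨hval, hnv⟩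
    · have hseteq : {i : ℕ | sapp σ t ((u ++ v) ++ [i]) ≠ none} =
          {i : ℕ | (σ.toFun X).label (v ++ [i]) ≠ none} := by
        ext i; simp only [Set.mem_setOf_eq, hchild i]
      have := (σ.toFun X).arity v a (by rw [← hval]; exact ha)
      rw [← this]
      congr 1 <;> exact hseteq
    · have hseteq := sapp_children_no_var σ t w hnv
      have := t.arity w a (by rw [← hval]; exact ha)
      rw [← this]
      congr 1 <;> exact hseteq

lemma appT_label (σ : Subst Sig V ar) (t : Tm Sig V ar) :
    (appT σ t).label = sapp σ t := by
  have hex : ∃ t' : Tm Sig V ar, t'.label = sapp σ t := sapp_realize σ t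
  rw [appT, dif_pos hex]
  exact hex.choose_spec

end T3C

namespace T3C

variable {Sig V : Type} {ar : Sig → ℕ}

lemma sapp_fin (σ : Subst Sig V ar) (t : Tm Sig V ar) (ht : t.Fin) :
    {w | sapp σ t w ≠ none}.Finite := by
  have hbig : ({w | t.label w ≠ none} ∪
      ⋃ u ∈ {w | t.label w ≠ none},
        (fun v => u ++ v) '' {v | ∃ X, t.label u = some (Sum.inr X) ∧
          (σ.toFun X).label v ≠ none} : Set (List ℕ)).Finite := by
    apply Set.Finite.union ht
    apply Set.Finite.biUnion ht
    intro u _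
    apply Set.Finite.image
    by_cases hX : ∃ X, t.label u = some (Sum.inr X)
    · obtain ⟨X, hX⟩ := hX
      apply Set.Finite.subset (σ.fin X)
      intro v hv
      obtain ⟨Y, hY, hv'⟩ := hv
      rw [hX] at hY
      have : X = Y := by
        have := Option.some.inj hY
        exact Sum.inr.inj this
      subst this
      exact hv'
    · apply Set.Finite.subset (Set.finite_empty)
      intro v hv
      obtain ⟨Y, hY, -⟩ := hv
      exact absurd ⟨Y, hY⟩ hX
  apply Set.Finite.subset hbig
  intro w hw
  simp only [Set.mem_setOf_eq] at hw
  rcases sapp_cases σ t w with ⟨u, v, X, rfl, hX, hval, -⟩ | ⟨hval, -⟩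
  · right
    refine Set.mem_biUnion (show u ∈ {w | t.label w ≠ none} by simp [hX]) ?_
    exact ⟨v, ⟨X, hX, by rw [← hval]; exact hw⟩, rfl⟩
  · left
    rw [hval] at hw
    exact hw

lemma idem_fix (σ : Subst Sig V ar) (hσ : Idem σ) (t u : Tm Sig V ar)
    (h : u.label = sapp σ t) : sapp σ u = u.label := by
  funext w
  rcases sapp_cases σ u w with ⟨p, v, Y, rfl, hY, hval, -⟩ | ⟨hval, -⟩
  · rcases sapp_cases σ t p with ⟨q, q', Z, hpq, hZ, hval2, -⟩ | ⟨hval2, hnv2⟩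
    · have hq' : (σ.toFun Z).label q' = some (Sum.inr Y) := by
        rw [← hval2, ← h]; exact hY
      have h1 : u.label (p ++ v) = (σ.toFun Z).label (q' ++ v) := by
        rw [h, hpq, List.append_assoc]
        exact sapp_graft σ hZ (q' ++ v)
      rw [hval, h1, ← hσ Z, sapp_graft σ hq' v]
    · exfalso
      apply hnv2 p [] (by simp) Y
      rw [← hval2, ← h]
      exact hY
  · exact hval

lemma fix_subtree (σ : Subst Sig V ar) (u r : Tm Sig V ar) (p : List ℕ)
    (hfix : sapp σ u = u.label) (hsub : ∀ v, r.label v = u.label (p ++ v)) :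
    sapp σ r = r.label := by
  funext w
  rcases sapp_cases σ r w with ⟨q, v, Y, rfl, hY, hval, -⟩ | ⟨hval, -⟩
  · rw [hval]
    have hu : u.label (p ++ q) = some (Sum.inr Y) := by rw [← hsub q]; exact hY
    have h1 : sapp σ u ((p ++ q) ++ v) = (σ.toFun Y).label v := sapp_graft σ hu v
    rw [hfix] at h1
    rw [← h1, hsub (q ++ v), ← List.append_assoc]
  · exact hval

lemma subAppAux_shift (σf : V → Tm Sig V ar) (t r : Tm Sig V ar) (i : ℕ)
    (hsub : ∀ v, t.label (i :: v) = r.label v) :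
    ∀ (w p : List ℕ), subAppAux σf t (i :: p) w = subAppAux σf r p w := by
  intro w
  induction w with
  | nil =>
    intro p
    have h1 : t.label (i :: p) = r.label p := hsub p
    rcases hl : r.label p with - | a
    · simp [subAppAux, h1, hl]
    · rcases a with f | Y <;> simp [subAppAux, h1, hl]
  | cons j v ih =>
    intro p
    have h1 : t.label (i :: p) = r.label p := hsub p
    rcases hl : r.label p with - | a
    · rw [show subAppAux σf t (i :: p) (j :: v) = subAppAux σf t ((i :: p) ++ [j]) v by
        simp [subAppAux, h1, hl],
        show subAppAux σf r p (j :: v) = subAppAux σf r (p ++ [j]) v by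
        simp [subAppAux, hl]]
      exact ih (p ++ [j])
    · rcases a with f | Y
      · rw [show subAppAux σf t (i :: p) (j :: v) = subAppAux σf t ((i :: p) ++ [j]) v by
          simp [subAppAux, h1, hl],
          show subAppAux σf r p (j :: v) = subAppAux σf r (p ++ [j]) v by
          simp [subAppAux, hl]]
        exact ih (p ++ [j])
      · simp [subAppAux, h1, hl]

lemma sapp_shift (σ : Subst Sig V ar) (t r : Tm Sig V ar) (i : ℕ) (f : Sig)
    (hroot : t.label [] = some (Sum.inl f))
    (hsub : ∀ v, t.label (i :: v) = r.label v) :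
    ∀ v, sapp σ t (i :: v) = sapp σ r v := by
  intro v
  show subAppAux σ.toFun t [] (i :: v) = subAppAux σ.toFun r [] v
  rw [show subAppAux σ.toFun t [] (i :: v) = subAppAux σ.toFun t ([] ++ [i]) v by
    simp [subAppAux, hroot]]
  exact subAppAux_shift σ.toFun t r i hsub v []

end T3C

namespace T3C

variable {V : Type}

/-- head of clause 1 : `nat(s(X))` -/
noncomputable def hd1 (X : V) : Tm Sig1 V ar1 :=
  nodeTm Sig1.nat [nodeTm Sig1.s [varTm X] rfl] rfl

/-- body term of clause 1 : `nat(X)` -/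
noncomputable def bd1 (X : V) : Tm Sig1 V ar1 :=
  nodeTm Sig1.nat [varTm X] rfl

lemma hd1_label_nil (X : V) : (hd1 X).label [] = some (Sum.inl Sig1.nat) := rfl

lemma hd1_label_0 (X : V) : (hd1 X).label [0] = some (Sum.inl Sig1.s) := rfl

lemma hd1_label_00 (X : V) : (hd1 X).label [0, 0] = some (Sum.inr X) := rfl

lemma hd1_label_succ (X : V) (j : ℕ) (v : List ℕ) :
    (hd1 X).label ((j + 1) :: v) = none := rfl

lemma hd1_label_0succ (X : V) (j : ℕ) (v : List ℕ) :
    (hd1 X).label (0 :: (j + 1) :: v) = none := rfl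

lemma hd1_label_00cons (X : V) (k : ℕ) (v : List ℕ) :
    (hd1 X).label (0 :: 0 :: k :: v) = none := by
  show (varTm X : Tm Sig1 V ar1).label (k :: v) = none
  simp [varTm]

lemma bd1_label_nil (X : V) : (bd1 X).label [] = some (Sum.inl Sig1.nat) := rfl

lemma bd1_label_0 (X : V) : (bd1 X).label [0] = some (Sum.inr X) := rfl

lemma bd1_label_succ (X : V) (j : ℕ) (v : List ℕ) :
    (bd1 X).label ((j + 1) :: v) = none := rfl

lemma bd1_label_0cons (X : V) (k : ℕ) (v : List ℕ) :
    (bd1 X).label (0 :: k :: v) = none := by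
  show (varTm X : Tm Sig1 V ar1).label (k :: v) = none
  simp [varTm]

lemma P1_clause1 (X : V) : (P1 X).clauses[1]? = some ⟨hd1 X, [bd1 X]⟩ := rfl

lemma P1_clause0_body (X : V) :
    ∃ h b, (P1 X).clauses[0]? = some ⟨h, b⟩ ∧ b.length = 0 :=
  ⟨_, _, rfl, rfl⟩

lemma P1_clause_none (X : V) (i : ℕ) : (P1 X).clauses[i + 2]? = none := by
  simp [P1]

end T3C

namespace T3C

variable {V : Type}

lemma cons_cons_inj : Function.Injective (fun v : List ℕ => 0 :: 0 :: v) := by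
  intro a b h; simpa using h

lemma cons_inj0 : Function.Injective (fun v : List ℕ => 0 :: v) := by
  intro a b h; simpa using h

/-- All the facts produced by matching the head of clause 1 (renamed by `ρ`)
against a σ-fixed finite term `u`, and applying `σ ∘ θ` to the renamed body. -/
lemma key_step (X : V) (ρ : V → V) (σ θ : Subst Sig1 V ar1)
    (u Hr Br : Tm Sig1 V ar1)
    (hHr : Hr.label = sapp (renSubst ρ) (hd1 X))
    (hBr : Br.label = sapp (renSubst ρ) (bd1 X))
    (hm : sapp θ Hr = u.label)
    (hfix : sapp σ u = u.label)
    (hufin : u.Fin) :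
    (appT σ (appT θ Br)).Fin ∧
      {w | (appT σ (appT θ Br)).label w ≠ none}.ncard <
        {w | u.label w ≠ none}.ncard := by
  -- labels of the renamed head
  have hHr00 : Hr.label [0, 0] = some (Sum.inr (ρ X)) := by
    rw [hHr]
    have h := sapp_graft (renSubst ρ) (hd1_label_00 X) []
    simpa [renSubst, varTm] using h
  have hHrnil : Hr.label [] = some (Sum.inl Sig1.nat) := by
    rw [hHr, sapp_no_var _ _ _ ?_, hd1_label_nil]
    intro p q hpq Y hl
    obtain ⟨rfl, rfl⟩ := List.append_eq_nil_iff.mp hpq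
    rw [hd1_label_nil] at hl; simp at hl
  have hHr0 : Hr.label [0] = some (Sum.inl Sig1.s) := by
    rw [hHr, sapp_no_var _ _ _ ?_, hd1_label_0]
    intro p q hpq Y hl
    rcases p with - | ⟨a, p⟩
    · rw [hd1_label_nil] at hl; simp at hl
    · obtain ⟨rfl, hq⟩ : a = 0 ∧ p ++ q = [] := by simpa using hpq
      obtain ⟨rfl, rfl⟩ := List.append_eq_nil_iff.mp hq
      rw [hd1_label_0] at hl; simp at hl
  have hHrnone1 : ∀ j v, Hr.label ((j + 1) :: v) = none := by
    intro j v
    rw [hHr, sapp_no_var _ _ _ ?_, hd1_label_succ]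
    intro p q hpq Y hl
    rcases p with - | ⟨a, p⟩
    · rw [hd1_label_nil] at hl; simp at hl
    · obtain ⟨rfl, -⟩ : a = j + 1 ∧ p ++ q = v := by simpa using hpq
      rw [hd1_label_succ] at hl; simp at hl
  have hHrnone2 : ∀ j v, Hr.label (0 :: (j + 1) :: v) = none := by
    intro j v
    rw [hHr, sapp_no_var _ _ _ ?_, hd1_label_0succ]
    intro p q hpq Y hl
    rcases p with - | ⟨a, p⟩
    · rw [hd1_label_nil] at hl; simp at hl
    · obtain ⟨rfl, hq⟩ : a = 0 ∧ p ++ q = (j + 1) :: v := by simpa using hpq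
      rcases p with - | ⟨b, p⟩
      · rw [hd1_label_0] at hl; simp at hl
      · obtain ⟨rfl, -⟩ : b = j + 1 ∧ p ++ q = v := by simpa using hq
        rw [hd1_label_0succ] at hl; simp at hl
  -- labels of the renamed body atom
  have hBrnil : Br.label [] = some (Sum.inl Sig1.nat) := by
    rw [hBr, sapp_no_var _ _ _ ?_, bd1_label_nil]
    intro p q hpq Y hl
    obtain ⟨rfl, rfl⟩ := List.append_eq_nil_iff.mp hpq
    rw [bd1_label_nil] at hl; simp at hl
  have hBr0 : Br.label [0] = some (Sum.inr (ρ X)) := by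
    rw [hBr]
    have h := sapp_graft (renSubst ρ) (bd1_label_0 X) []
    simpa [renSubst, varTm] using h
  have hBrsucc : ∀ j v, Br.label ((j + 1) :: v) = none := by
    intro j v
    rw [hBr, sapp_no_var _ _ _ ?_, bd1_label_succ]
    intro p q hpq Y hl
    rcases p with - | ⟨a, p⟩
    · rw [bd1_label_nil] at hl; simp at hl
    · obtain ⟨rfl, -⟩ : a = j + 1 ∧ p ++ q = v := by simpa using hpq
      rw [bd1_label_succ] at hl; simp at hl
  set r : Tm Sig1 V ar1 := θ.toFun (ρ X) with hr
  -- labels of u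
  have hu00 : ∀ v, u.label (0 :: 0 :: v) = r.label v := by
    intro v
    rw [← hm]
    have h := sapp_graft θ hHr00 v
    simpa using h
  have hu0 : u.label [0] = some (Sum.inl Sig1.s) := by
    rw [← hm, sapp_no_var _ _ _ ?_, hHr0]
    intro p q hpq Y hl
    rcases p with - | ⟨a, p⟩
    · rw [hHrnil] at hl; simp at hl
    · obtain ⟨rfl, hq⟩ : a = 0 ∧ p ++ q = [] := by simpa using hpq
      obtain ⟨rfl, rfl⟩ := List.append_eq_nil_iff.mp hq
      rw [hHr0] at hl; simp at hl
  have husucc : ∀ j v, u.label ((j + 1) :: v) = none := by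
    intro j v
    rw [← hm, sapp_no_var _ _ _ ?_, hHrnone1]
    intro p q hpq Y hl
    rcases p with - | ⟨a, p⟩
    · rw [hHrnil] at hl; simp at hl
    · obtain ⟨rfl, -⟩ : a = j + 1 ∧ p ++ q = v := by simpa using hpq
      rw [hHrnone1] at hl; simp at hl
  have hu0succ : ∀ j v, u.label (0 :: (j + 1) :: v) = none := by
    intro j v
    rw [← hm, sapp_no_var _ _ _ ?_, hHrnone2]
    intro p q hpq Y hl
    rcases p with - | ⟨a, p⟩
    · rw [hHrnil] at hl; simp at hl
    · obtain ⟨rfl, hq⟩ : a = 0 ∧ p ++ q = (j + 1) :: v := by simpa using hpq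
      rcases p with - | ⟨b, p⟩
      · rw [hHr0] at hl; simp at hl
      · obtain ⟨rfl, -⟩ : b = j + 1 ∧ p ++ q = v := by simpa using hq
        rw [hHrnone2] at hl; simp at hl
  -- σ fixes the subterm r
  have hfixr : sapp σ r = r.label := by
    apply fix_subtree σ u r [0, 0] hfix
    intro v
    rw [show ([0, 0] : List ℕ) ++ v = 0 :: 0 :: v by simp, hu00]
  -- labels of x = appT θ Br
  set x : Tm Sig1 V ar1 := appT θ Br with hxdef
  have hxl : x.label = sapp θ Br := appT_label θ Br
  have hxnil : x.label [] = some (Sum.inl Sig1.nat) := by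
    rw [hxl, sapp_no_var _ _ _ ?_, hBrnil]
    intro p q hpq Y hl
    obtain ⟨rfl, rfl⟩ := List.append_eq_nil_iff.mp hpq
    rw [hBrnil] at hl; simp at hl
  have hx0 : ∀ v, x.label (0 :: v) = r.label v := by
    intro v
    rw [hxl]
    have h := sapp_graft θ hBr0 v
    simpa using h
  have hxsucc : ∀ j v, x.label ((j + 1) :: v) = none := by
    intro j v
    rw [hxl, sapp_no_var _ _ _ ?_, hBrsucc]
    intro p q hpq Y hl
    rcases p with - | ⟨a, p⟩
    · rw [hBrnil] at hl; simp at hl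
    · obtain ⟨rfl, -⟩ : a = j + 1 ∧ p ++ q = v := by simpa using hpq
      rw [hBrsucc] at hl; simp at hl
  -- labels of u' = appT σ x
  set u' : Tm Sig1 V ar1 := appT σ x with hu'def
  have hu'l : u'.label = sapp σ x := appT_label σ x
  have hu'nil : u'.label [] ≠ none := by
    rw [hu'l]
    exact sapp_ne_none σ x (by rw [hxnil]; simp)
  have hu'0 : ∀ v, u'.label (0 :: v) = r.label v := by
    intro v
    rw [hu'l, sapp_shift σ x r 0 Sig1.nat hxnil hx0 v, hfixr]
  have hu'succ : ∀ j v, u'.label ((j + 1) :: v) = none := by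
    intro j v
    rw [hu'l, sapp_no_var _ _ _ ?_, hxsucc]
    intro p q hpq Y hl
    rcases p with - | ⟨a, p⟩
    · rw [hxnil] at hl; simp at hl
    · obtain ⟨rfl, -⟩ : a = j + 1 ∧ p ++ q = v := by simpa using hpq
      rw [hxsucc] at hl; simp at hl
  -- domains
  have hdomu : {w | u.label w ≠ none} =
      insert ([] : List ℕ) (insert [0]
        ((fun v => 0 :: 0 :: v) '' {v | r.label v ≠ none})) := by
    ext w
    match w with
    | [] => simp [u.root]
    | [0] => simp [hu0]
    | (j+1) :: v => simp [husucc]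
    | 0 :: (j+1) :: v =>
      simp only [Set.mem_setOf_eq, hu0succ, Set.mem_insert_iff, Set.mem_image]
      simp
    | 0 :: 0 :: v =>
      simp only [Set.mem_setOf_eq, hu00, Set.mem_insert_iff, Set.mem_image]
      simp
  have hdomu' : {w | u'.label w ≠ none} =
      insert ([] : List ℕ) ((fun v => 0 :: v) '' {v | r.label v ≠ none}) := by
    ext w
    match w with
    | [] => simp [hu'nil]
    | (j+1) :: v => simp [hu'succ]
    | 0 :: v =>
      simp only [Set.mem_setOf_eq, hu'0, Set.mem_insert_iff, Set.mem_image]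
      simp
  have hrfin : {v | r.label v ≠ none}.Finite := by
    have : {v | r.label v ≠ none} =
        (fun v => 0 :: 0 :: v) ⁻¹' {w | u.label w ≠ none} := by
      ext v; simp [hu00]
    rw [this]
    exact Set.Finite.preimage cons_cons_inj.injOn hufin
  have hnmem1 : ([] : List ℕ) ∉
      (insert [0] ((fun v => 0 :: 0 :: v) '' {v | r.label v ≠ none})) := by simp
  have hnmem2 : ([0] : List ℕ) ∉
      ((fun v => 0 :: 0 :: v) '' {v | r.label v ≠ none}) := by simp
  have hnmem3 : ([] : List ℕ) ∉
      ((fun v => 0 :: v) '' {v | r.label v ≠ none}) := by simp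
  have hcard_u : {w | u.label w ≠ none}.ncard = {v | r.label v ≠ none}.ncard + 2 := by
    rw [hdomu, Set.ncard_insert_of_notMem hnmem1 ((hrfin.image _).insert _),
      Set.ncard_insert_of_notMem hnmem2 (hrfin.image _),
      Set.ncard_image_of_injective _ cons_cons_inj]
  have hcard_u' : {w | u'.label w ≠ none}.ncard = {v | r.label v ≠ none}.ncard + 1 := by
    rw [hdomu', Set.ncard_insert_of_notMem hnmem3 (hrfin.image _),
      Set.ncard_image_of_injective _ cons_inj0]
  constructor
  · show ({w | u'.label w ≠ none} : Set (List ℕ)).Finite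
    rw [hdomu']
    exact ((hrfin.image _).insert _)
  · rw [hcard_u, hcard_u']
    omega

end T3C

namespace T3C

lemma opt_ext_none {α : Type _} (T : List ℕ → Option α)
    (hpre : ∀ (w : List ℕ) (i : ℕ), T (w ++ [i]) ≠ none → T w ≠ none)
    {w : List ℕ} (h : T w = none) : ∀ v, T (w ++ v) = none := by
  intro v
  induction v generalizing w with
  | nil => simpa using h
  | cons j v ih =>
    have h1 : T (w ++ [j]) = none := by
      by_contra hc
      exact (hpre w j hc) h
    have h2 := ih h1
    rw [show w ++ j :: v = (w ++ [j]) ++ v by simp]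
    exact h2

variable {V VR : Type}

lemma subtree_finite (S : Scheme Sig1 V ar1 VR) (X : V) (C : Clause Sig1 V ar1)
    (σ : Subst Sig1 V ar1) (hσ : Idem σ)
    (T : List ℕ → Option (RLab Sig1 V ar1 VR))
    (hT : RewSpec S (P1 X) C σ T) :
    ∀ (n : ℕ) (w : List ℕ) (u : Tm Sig1 V ar1), T w = some (Sum.inl u) →
      sapp σ u = u.label → u.Fin → {w' | u.label w' ≠ none}.ncard ≤ n →
      {v | T (w ++ v) ≠ none}.Finite := by
  obtain ⟨-, hor, hvr, hand, hpre⟩ := hT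
  have hext : ∀ {w : List ℕ}, T w = none → ∀ v, T (w ++ v) = none :=
    fun {w} h => opt_ext_none T hpre h
  intro n
  induction n with
  | zero =>
    intro w u hw hfix hufin hcard
    exfalso
    have : 0 < {w' | u.label w' ≠ none}.ncard :=
      (Set.ncard_pos hufin).mpr ⟨[], u.root⟩
    omega
  | succ n ih =>
    intro w u hw hfix hufin hcard
    -- children with index ≥ 2 vanish
    have hge2 : ∀ i v, T ((w ++ [i + 2]) ++ v) = none := by
      intro i v
      apply hext ?_ v
      have h := hand w u hw (i + 2)
      rw [P1_clause_none X i] at h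
      exact h
    -- child 0 : clause nat(0) ← (empty body), or a Tier 2 variable
    have h0 : ∀ j, T ((w ++ [0]) ++ [j]) = none := by
      have h := hand w u hw 0
      split at h
      · intro j
        by_contra hc
        exact (hpre (w ++ [0]) j hc) h
      · rename_i Ci heq
        have hCi : Ci = ⟨nodeTm Sig1.nat [nodeTm Sig1.zero [] rfl] rfl, []⟩ := by
          have hrfl : ((P1 X).clauses)[0]? =
              some (⟨nodeTm Sig1.nat [nodeTm Sig1.zero [] rfl] rfl, []⟩ :
                Clause Sig1 V ar1) := rfl
          rw [hrfl] at heq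
          exact (Option.some.inj heq).symm
        subst hCi
        split at h
        · rename_i θ0 hm0
          intro j
          have hch := hor (w ++ [0]) _ h j
          have hlen := (S.ren_renaming (w ++ [0])
            ⟨nodeTm Sig1.nat [nodeTm Sig1.zero [] rfl] rfl, []⟩).choose_spec.2.2.1
          have hbody : (S.ren (w ++ [0])
              ⟨nodeTm Sig1.nat [nodeTm Sig1.zero [] rfl] rfl, []⟩).body = [] := by
            have hl0 : (S.ren (w ++ [0])
                ⟨nodeTm Sig1.nat [nodeTm Sig1.zero [] rfl] rfl, []⟩).body.length = 0 := by
              rw [hlen]; rfl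
            exact List.length_eq_zero_iff.mp hl0
          rw [hch]
          simp [appC, hbody]
        · rename_i hm0
          intro j
          exact hvr (w ++ [0]) _ h j
    -- child 1 : clause nat(s(X)) ← nat(X), or a Tier 2 variable
    have h1 := hand w u hw 1
    split at h1
    · rename_i heq
      rw [P1_clause1 X] at heq
      simp at heq
    · rename_i Ci heq
      have hCi : Ci = ⟨hd1 X, [bd1 X]⟩ := by
        rw [P1_clause1 X] at heq
        exact (Option.some.inj heq).symm
      subst hCi
      split at h1
      · -- matched: one new and-node below, with strictly smaller term
        rename_i θ hm1
        obtain ⟨ρ, -, hρhead, hρlen, hρbody⟩ := S.ren_renaming (w ++ [1]) ⟨hd1 X, [bd1 X]⟩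
        obtain ⟨Br, hBrlist⟩ := List.length_eq_one_iff.mp
          (show (S.ren (w ++ [1]) ⟨hd1 X, [bd1 X]⟩).body.length = 1 by rw [hρlen]; rfl)
        have hBr : Br.label = sapp (renSubst ρ) (bd1 X) :=
          hρbody 0 (bd1 X) Br rfl (by rw [hBrlist]; rfl)
        have hHr : (S.ren (w ++ [1]) ⟨hd1 X, [bd1 X]⟩).head.label =
            sapp (renSubst ρ) (hd1 X) := hρhead
        have hmatch : sapp θ (S.ren (w ++ [1]) ⟨hd1 X, [bd1 X]⟩).head = u.label :=
          (S.mgm_sound _ _ _ hm1).1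
        obtain ⟨hfin', hlt⟩ := key_step X ρ σ θ u _ Br hHr hBr hmatch hfix hufin
        -- children of the clause node
        have hch := hor (w ++ [1]) _ h1
        have hbody1 : (appC σ (appC θ (S.ren (w ++ [1]) ⟨hd1 X, [bd1 X]⟩))).body =
            [appT σ (appT θ Br)] := by
          simp [appC, hBrlist]
        have hch0 : T ((w ++ [1]) ++ [0]) = some (Sum.inl (appT σ (appT θ Br))) := by
          rw [hch 0, hbody1]; rfl
        have hchs : ∀ j, T ((w ++ [1]) ++ [j + 1]) = none := by
          intro j
          rw [hch (j + 1), hbody1]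
          rfl
        have hfix' : sapp σ (appT σ (appT θ Br)) = (appT σ (appT θ Br)).label :=
          idem_fix σ hσ (appT θ Br) _ (appT_label σ _)
        have hsub := ih ((w ++ [1]) ++ [0]) (appT σ (appT θ Br)) hch0 hfix' hfin'
          (by omega)
        apply Set.Finite.subset (Set.Finite.insert ([] : List ℕ)
          (Set.Finite.insert [0] (Set.Finite.insert [1]
            ((hsub.image (fun v => 1 :: 0 :: v))))))
        intro v hv
        simp only [Set.mem_setOf_eq] at hv
        match v with
        | [] => simp
        | (i+2) :: v' =>
          exfalso
          rw [show w ++ (i+2) :: v' = (w ++ [i+2]) ++ v' by simp] at hv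
          exact hv (hge2 i v')
        | [0] => simp
        | 0 :: j :: v' =>
          exfalso
          rw [show w ++ 0 :: j :: v' = ((w ++ [0]) ++ [j]) ++ v' by simp] at hv
          exact hv (hext (h0 j) v')
        | [1] => simp
        | 1 :: (j+1) :: v' =>
          exfalso
          rw [show w ++ 1 :: (j+1) :: v' = ((w ++ [1]) ++ [j+1]) ++ v' by simp] at hv
          exact hv (hext (hchs j) v')
        | 1 :: 0 :: v' =>
          right; right; right
          refine ⟨v', ?_, rfl⟩
          simp only [Set.mem_setOf_eq]
          rw [show ((w ++ [1]) ++ [0]) ++ v' = w ++ 1 :: 0 :: v' by simp]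
          exact hv
      · -- variable or-node: everything below w is inside {[], [0], [1]}
        rename_i hm1
        have h1c : ∀ j, T ((w ++ [1]) ++ [j]) = none := fun j => hvr (w ++ [1]) _ h1 j
        apply Set.Finite.subset (Set.Finite.insert ([] : List ℕ)
          (Set.Finite.insert [0] (Set.finite_singleton [1])))
        intro v hv
        simp only [Set.mem_setOf_eq] at hv
        match v with
        | [] => simp
        | (i+2) :: v' =>
          exfalso
          rw [show w ++ (i+2) :: v' = (w ++ [i+2]) ++ v' by simp] at hv
          exact hv (hge2 i v')
        | [0] => simp
        | 0 :: j :: v' =>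
          exfalso
          rw [show w ++ 0 :: j :: v' = ((w ++ [0]) ++ [j]) ++ v' by simp] at hv
          exact hv (hext (h0 j) v')
        | [1] => simp
        | 1 :: j :: v' =>
          exfalso
          rw [show w ++ 1 :: j :: v' = ((w ++ [1]) ++ [j]) ++ v' by simp] at hv
          exact hv (hext (h1c j) v')

end T3C

open T3C in
/-- for every goal clause `? ← t` with `t` a finite term over
Σ₁ and every idempotent substitution `σ`, the rewriting tree
`rew(P₁, ? ← t, σ)` is finite; that is, `P₁` is observationally productive. -/
theorem statement17 {V VR : Type} [Countable V] [Infinite V]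
    [Countable VR] [Infinite VR]
    (S : Scheme Sig1 V ar1 VR) (X : V)
    (t : Tm Sig1 V ar1) (ht : t.Fin)
    (htq : ∀ w : List ℕ, t.label w ≠ some (Sum.inl Sig1.qm))
    (σ : Subst Sig1 V ar1) (hσ : Idem σ)
    (T : List ℕ → Option (RLab Sig1 V ar1 VR))
    (hT : RewSpec S (P1 X) (goalClause t) σ T) :
    ({ w | T w ≠ none } : Set (List ℕ)).Finite := by
  have hbody : (appC σ (goalClause t)).body = [appT σ t] := by
    simp [appC, goalClause]
  have h00 : T [0] = some (Sum.inl (appT σ t)) := by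
    have h := hT.2.1 [] _ hT.1 0
    rw [hbody] at h
    simpa using h
  have hnil : ∀ j, T [j + 1] = none := by
    intro j
    have h := hT.2.1 [] _ hT.1 (j + 1)
    rw [hbody] at h
    simpa using h
  have hfix0 : sapp σ (appT σ t) = (appT σ t).label :=
    idem_fix σ hσ t _ (appT_label σ t)
  have hfin0 : (appT σ t).Fin := by
    show ({w | (appT σ t).label w ≠ none}).Finite
    rw [appT_label]
    exact sapp_fin σ t ht
  have hmain := subtree_finite S X (goalClause t) σ hσ T hT
    ({w' | (appT σ t).label w' ≠ none}.ncard) [0] (appT σ t) h00 hfix0 hfin0 le_rfl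
  apply Set.Finite.subset (Set.Finite.insert ([] : List ℕ)
    (hmain.image (fun v => 0 :: v)))
  intro w hw
  simp only [Set.mem_setOf_eq] at hw
  match w with
  | [] => simp
  | 0 :: v =>
    simp only [Set.mem_insert_iff, Set.mem_image]
    right
    exact ⟨v, hw, rfl⟩
  | (j+1) :: v =>
    exfalso
    have hn : T ([j + 1] ++ v) = none := opt_ext_none T hT.2.2.2.2 (hnil j) v
    exact hw hn
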